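/- Let α > 1, x_0 > 0, and f: [0, x_0] → [0,∞) continuous with f(0) = 0, continuously differentiable on (0, x_0), such that x ↦ x^{1-α}·f'(x) is monotone decreasing on (0, x_0). Then for every n ∈ ℕ and every (x_1,...,x_n) ∈ [0,x_0]^n with ∑_{i=1}^n x_i = 1 and ∑_{i=1}^n x_i^α ≥ x_0^α, one has ∑_{i=1}^n f(x_i) ≥ f(x_0). -/

import Mathlib

open Set

/-- Superadditivity-type lower bound: if `f : [0,x₀] → [0,∞)` is continuous with
`f(0) = 0`, continuously differentiable on `(0,x₀)` with `x ↦ x^{1-α} f'(x)` monotone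
decreasing, then for any `(x_1,…,x_n) ∈ [0,x₀]^n` with `∑ x_i = 1` and `∑ x_i^α ≥ x₀^α`
one has `∑ f(x_i) ≥ f(x₀)`. -/
theorem stmt_14 (α x₀ : ℝ) (hα : 1 < α) (hx₀ : 0 < x₀) (f : ℝ → ℝ)
    (hcont : ContinuousOn f (Icc 0 x₀)) (hf0 : f 0 = 0)
    (hnonneg : ∀ x ∈ Icc (0:ℝ) x₀, 0 ≤ f x)
    (hdiff : ContDiffOn ℝ 1 f (Ioo 0 x₀))
    (hanti : AntitoneOn (fun x => x ^ (1 - α) * deriv f x) (Ioo 0 x₀))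
    (n : ℕ) (x : Fin n → ℝ) (hx : ∀ i, x i ∈ Icc (0:ℝ) x₀)
    (hsum1 : ∑ i, x i = 1) (hsumα : x₀ ^ α ≤ ∑ i, x i ^ α) :
    f x₀ ≤ ∑ i, f (x i) := by
  have hα0 : (0:ℝ) < α := by linarith
  have hfdiff : ∀ s ∈ Ioo (0:ℝ) x₀, DifferentiableAt ℝ f s := by
    intro s hs
    exact ((hdiff.differentiableOn one_ne_zero) s hs).differentiableAt (isOpen_Ioo.mem_nhds hs)
  -- Lemma A : t f'(t) ≤ α f(t)
  have lemA : ∀ t ∈ Ioo (0:ℝ) x₀, t * deriv f t ≤ α * f t := by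
    intro t ht
    set c : ℝ := t ^ (1 - α) * deriv f t with hc
    set F : ℝ → ℝ := fun s => f s - c / α * s ^ α with hFdef
    have hmono : MonotoneOn F (Icc 0 t) := by
      apply monotoneOn_of_deriv_nonneg (convex_Icc 0 t)
      · apply ContinuousOn.sub (hcont.mono (Icc_subset_Icc le_rfl ht.2.le))
        apply ContinuousOn.mul continuousOn_const
        intro s hs
        exact (Real.continuousAt_rpow_const s α (Or.inr hα0.le)).continuousWithinAt
      · rw [interior_Icc]
        intro s hs
        have hsx : s ∈ Ioo (0:ℝ) x₀ := ⟨hs.1, hs.2.trans ht.2⟩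
        exact ((hfdiff s hsx).sub (((Real.hasDerivAt_rpow_const
          (Or.inl hs.1.ne')).const_mul (c/α)).differentiableAt)).differentiableWithinAt
      · rw [interior_Icc]
        intro s hs
        have hs0 : 0 < s := hs.1
        have hsx : s ∈ Ioo (0:ℝ) x₀ := ⟨hs0, hs.2.trans ht.2⟩
        have hF' : HasDerivAt F (deriv f s - c / α * (α * s ^ (α - 1))) s :=
          ((hfdiff s hsx).hasDerivAt).sub
            ((Real.hasDerivAt_rpow_const (Or.inl hs0.ne')).const_mul (c/α))
        rw [hF'.deriv]
        have h1 : s ^ (1 - α) * s ^ (α - 1) = 1 := by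
          rw [← Real.rpow_add hs0]; norm_num
        have h2 : c ≤ s ^ (1 - α) * deriv f s := hanti hsx ht hs.2.le
        have h3 : (0:ℝ) < s ^ (α - 1) := Real.rpow_pos_of_pos hs0 _
        have h4 : c * s ^ (α - 1) ≤ deriv f s := by
          calc c * s ^ (α - 1) ≤ (s ^ (1 - α) * deriv f s) * s ^ (α - 1) :=
                mul_le_mul_of_nonneg_right h2 h3.le
            _ = deriv f s := by rw [mul_comm (s ^ (1-α)) (deriv f s), mul_assoc, h1, mul_one]
        have : c / α * (α * s ^ (α - 1)) = c * s ^ (α - 1) := by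
          field_simp
        rw [this]; linarith
    have h0mem : (0:ℝ) ∈ Icc (0:ℝ) t := ⟨le_rfl, ht.1.le⟩
    have htmem : t ∈ Icc (0:ℝ) t := ⟨ht.1.le, le_rfl⟩
    have hFt : F 0 ≤ F t := hmono h0mem htmem ht.1.le
    have hF0 : F 0 = 0 := by
      simp only [hFdef, hf0, Real.zero_rpow hα0.ne', mul_zero, sub_zero]
    have htα : t ^ (1 - α) * t ^ α = t := by
      rw [← Real.rpow_add ht.1]; norm_num
    have : c * t ^ α = t * deriv f t := by
      rw [hc, mul_comm (t ^ (1-α)) (deriv f t), mul_assoc, htα, mul_comm]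
    rw [hF0] at hFt
    simp only [hFdef] at hFt
    have hct : c / α * t ^ α ≤ f t := by linarith
    have hmul := mul_le_mul_of_nonneg_left hct hα0.le
    have heq : α * (c / α * t ^ α) = c * t ^ α := by field_simp
    rw [heq] at hmul
    linarith [this, hmul]
  -- Lemma B : x^α f(x₀) ≤ x₀^α f(x)
  have lemB : ∀ y ∈ Icc (0:ℝ) x₀, y ^ α * f x₀ ≤ x₀ ^ α * f y := by
    intro y hy
    rcases eq_or_lt_of_le hy.1 with h0 | h0
    · subst h0
      simp [Real.zero_rpow hα0.ne', hf0]
    rcases eq_or_lt_of_le hy.2 with h1 | h1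
    · rw [h1]
    -- y ∈ Ioo 0 x₀; use antitonicity of s ↦ f s * s^(-α) on [y, x₀]
    set h : ℝ → ℝ := fun s => f s * s ^ (-α) with hhdef
    have hantih : AntitoneOn h (Icc y x₀) := by
      apply antitoneOn_of_deriv_nonpos (convex_Icc y x₀)
      · apply ContinuousOn.mul (hcont.mono (Icc_subset_Icc h0.le le_rfl))
        intro s hs
        exact (Real.continuousAt_rpow_const s (-α)
          (Or.inl (h0.trans_le hs.1).ne')).continuousWithinAt
      · rw [interior_Icc]
        intro s hs
        have hsx : s ∈ Ioo (0:ℝ) x₀ := ⟨h0.trans hs.1, hs.2⟩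
        exact ((hfdiff s hsx).mul ((Real.hasDerivAt_rpow_const
          (Or.inl hsx.1.ne')).differentiableAt)).differentiableWithinAt
      · rw [interior_Icc]
        intro s hs
        have hsx : s ∈ Ioo (0:ℝ) x₀ := ⟨h0.trans hs.1, hs.2⟩
        have hs0 : 0 < s := hsx.1
        have hh' : HasDerivAt h (deriv f s * s ^ (-α) + f s * (-α * s ^ (-α - 1))) s :=
          ((hfdiff s hsx).hasDerivAt).mul (Real.hasDerivAt_rpow_const (Or.inl hs0.ne'))
        rw [hh'.deriv]
        have h1 : s ^ (-α - 1) * s = s ^ (-α) := by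
          nth_rewrite 2 [← Real.rpow_one s]
          rw [← Real.rpow_add hs0]; norm_num
        have h2 : (0:ℝ) < s ^ (-α - 1) := Real.rpow_pos_of_pos hs0 _
        have h3 := lemA s hsx
        rw [← h1]
        nlinarith [mul_le_mul_of_nonneg_left h3 h2.le]
    have hkey : h x₀ ≤ h y := hantih ⟨le_rfl, h1.le⟩ ⟨h1.le, le_rfl⟩ h1.le
    have hy0 : (0:ℝ) < y := h0
    have e1 : y ^ (-α) * y ^ α = 1 := by rw [← Real.rpow_add hy0]; norm_num
    have e2 : x₀ ^ (-α) * x₀ ^ α = 1 := by rw [← Real.rpow_add hx₀]; norm_num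
    have p1 : (0:ℝ) < y ^ α := Real.rpow_pos_of_pos hy0 _
    have p2 : (0:ℝ) < x₀ ^ α := Real.rpow_pos_of_pos hx₀ _
    have hmul := mul_le_mul_of_nonneg_right hkey (mul_pos p1 p2).le
    simp only [hhdef] at hmul
    have eL : f x₀ * x₀ ^ (-α) * (y ^ α * x₀ ^ α) = y ^ α * f x₀ := by
      have e : f x₀ * x₀ ^ (-α) * (y ^ α * x₀ ^ α)
          = (x₀ ^ (-α) * x₀ ^ α) * (y ^ α * f x₀) := by ring
      rw [e, e2, one_mul]
    have eR : f y * y ^ (-α) * (y ^ α * x₀ ^ α) = x₀ ^ α * f y := by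
      have e : f y * y ^ (-α) * (y ^ α * x₀ ^ α)
          = (y ^ (-α) * y ^ α) * (x₀ ^ α * f y) := by ring
      rw [e, e1, one_mul]
    rw [eL, eR] at hmul
    exact hmul
  -- assemble
  have p2 : (0:ℝ) < x₀ ^ α := Real.rpow_pos_of_pos hx₀ _
  have hsum : ∑ i, (x i) ^ α * f x₀ ≤ ∑ i, x₀ ^ α * f (x i) :=
    Finset.sum_le_sum fun i _ => lemB (x i) (hx i)
  rw [← Finset.sum_mul, ← Finset.mul_sum] at hsum
  have hfx₀ : 0 ≤ f x₀ := hnonneg x₀ ⟨hx₀.le, le_rfl⟩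
  have : x₀ ^ α * f x₀ ≤ x₀ ^ α * ∑ i, f (x i) := by
    calc x₀ ^ α * f x₀ ≤ (∑ i, x i ^ α) * f x₀ := mul_le_mul_of_nonneg_right hsumα hfx₀
      _ ≤ x₀ ^ α * ∑ i, f (x i) := hsum
  exact le_of_mul_le_mul_left this p2
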